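/- For nonnegative integers n, m, l, r with rl ≤ m and r ≤ n and real θ > 0, the r-th falling factorial moment of R_{l,n,m} equals m!·r!·C(n,r)·(θ+n-r)^{(m-rl)} / ((m-rl)!·(θ+n)^{(m)}), where R_{l,n,m} has distribution P(R_{l,n,m}=x) = (m!/(θ+n)^{(m)})·Σ_{i=x}^{min(n,⌊m/l⌋)} (-1)^{i-x}·C(i,x)·C(n,i)·(θ+n-i)^{(m-il)}/(m-il)!. That is, Σ_x x^{[r]}·P(R_{l,n,m}=x) = m!·r!·C(n,r)·(θ+n-r)^{(m-rl)}/((m-rl)!·(θ+n)^{(m)}). -/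

import Mathlib

open Finset

/-- Rising factorial `a^{(k)} = a(a+1)⋯(a+k-1)`. -/
noncomputable def rise (a : ℝ) (k : ℕ) : ℝ := ∏ i ∈ Finset.range k, (a + i)

/-- Falling factorial `a^{[k]} = a(a-1)⋯(a-k+1)`. -/
noncomputable def fall (a : ℝ) (k : ℕ) : ℝ := ∏ i ∈ Finset.range k, (a - i)

lemma fall_nat (x r : ℕ) : fall (x : ℝ) r = (x.descFactorial r : ℝ) := by
  induction r with
  | zero => simp [fall]
  | succ r ih =>
    rw [fall, Finset.prod_range_succ, ← fall, ih, Nat.descFactorial_succ]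
    by_cases h : r ≤ x
    · push_cast [Nat.cast_sub h]; ring
    · have : x.descFactorial r = 0 := Nat.descFactorial_eq_zero_iff_lt.mpr (by omega)
      simp [this]

lemma alt_sum (k : ℕ) :
    ∑ j ∈ Finset.range (k + 1), (-1 : ℝ) ^ j * (k.choose j : ℝ)
      = if k = 0 then 1 else 0 := by
  have h := congrArg (fun z : ℤ => (z : ℝ)) (Int.alternating_sum_range_choose (n := k))
  push_cast at h
  split_ifs with hk <;> simp_all

lemma neg_pow_sub (k j : ℕ) (h : j ≤ k) : (-1 : ℝ) ^ (k - j) = (-1) ^ k * (-1) ^ j := by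
  have : (-1 : ℝ) ^ (k + j) = (-1) ^ (k - j) := by
    rw [show k + j = k - j + 2 * j by omega, pow_add, pow_mul]
    simp
  rw [← this, pow_add]

lemma key (i r : ℕ) :
    ∑ x ∈ Finset.range (i + 1),
      fall (x : ℝ) r * ((-1 : ℝ) ^ (i - x) * (i.choose x : ℝ))
      = if i = r then (r.factorial : ℝ) else 0 := by
  by_cases hir : r ≤ i
  · have hzero : ∀ x ∈ Finset.Ico 0 r,
        fall (x : ℝ) r * ((-1 : ℝ) ^ (i - x) * (i.choose x : ℝ)) = 0 := by
      intro x hx; rw [Finset.mem_Ico] at hx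
      rw [fall_nat, Nat.descFactorial_eq_zero_iff_lt.mpr (by omega)]; simp
    rw [Finset.range_eq_Ico,
      ← Finset.sum_Ico_consecutive _ (Nat.zero_le r) (by omega : r ≤ i + 1),
      Finset.sum_eq_zero hzero, zero_add, Finset.sum_Ico_eq_sum_range]
    have hstep : ∀ j ∈ Finset.range (i + 1 - r),
        fall ((r + j : ℕ) : ℝ) r * ((-1 : ℝ) ^ (i - (r + j)) * (i.choose (r + j) : ℝ))
        = (r.factorial : ℝ) * (i.choose r : ℝ) * (-1 : ℝ) ^ (i - r) *
            ((-1 : ℝ) ^ j * (((i - r).choose j : ℝ))) := by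
      intro j hj; rw [Finset.mem_range] at hj
      rw [fall_nat, Nat.descFactorial_eq_factorial_mul_choose]
      have hc : i.choose (r + j) * (r + j).choose r = i.choose r * (i - r).choose (r + j - r) :=
        Nat.choose_mul (by omega)
      rw [Nat.add_sub_cancel_left] at hc
      have hc' : (i.choose (r + j) : ℝ) * ((r + j).choose r : ℝ)
          = (i.choose r : ℝ) * ((i - r).choose j : ℝ) := by exact_mod_cast hc
      have hp : (-1 : ℝ) ^ (i - (r + j)) = (-1) ^ (i - r) * (-1) ^ j := by
        rw [show i - (r + j) = (i - r) - j by omega, neg_pow_sub _ _ (by omega)]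
      rw [hp]
      push_cast
      linear_combination (r.factorial : ℝ) * (-1 : ℝ) ^ (i - r) * (-1 : ℝ) ^ j * hc'
    rw [Finset.sum_congr rfl hstep, ← Finset.mul_sum,
      show i + 1 - r = (i - r) + 1 by omega, alt_sum]
    by_cases h : i = r
    · subst h; simp
    · rw [if_neg (by omega), if_neg h]; simp
  · rw [Finset.sum_eq_zero, if_neg (by omega)]
    intro x hx; rw [Finset.mem_range] at hx
    rw [fall_nat, Nat.descFactorial_eq_zero_iff_lt.mpr (by omega)]; simp

theorem stmt_6 (n m l r : ℕ) (hl : 1 ≤ l) (hrl : r * l ≤ m) (hr : r ≤ n)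
    (θ : ℝ) (hθ : 0 < θ) :
    ∑ x ∈ Finset.range (min n (m / l) + 1),
      fall (x : ℝ) r *
        ((m.factorial : ℝ) / rise (θ + n) m *
          ∑ i ∈ Finset.Icc x (min n (m / l)),
            (-1 : ℝ) ^ (i - x) * (i.choose x : ℝ) * (n.choose i) *
              rise (θ + n - i) (m - i * l) / ((m - i * l).factorial))
    = (m.factorial : ℝ) * (r.factorial : ℝ) * (n.choose r) *
        rise (θ + n - r) (m - r * l)
        / ((m - r * l).factorial * rise (θ + n) m) := by
  set N := min n (m / l) with hN
  have hrN : r ≤ N := le_min hr ((Nat.le_div_iff_mul_le (by omega)).mpr hrl)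
  have step1 : ∀ x ∈ Finset.range (N + 1),
      fall (x : ℝ) r *
        ((m.factorial : ℝ) / rise (θ + n) m *
          ∑ i ∈ Finset.Icc x N,
            (-1 : ℝ) ^ (i - x) * (i.choose x : ℝ) * (n.choose i) *
              rise (θ + n - i) (m - i * l) / ((m - i * l).factorial))
      = ∑ i ∈ Finset.Icc x N,
          (fall (x : ℝ) r * ((-1 : ℝ) ^ (i - x) * (i.choose x : ℝ))) *
            ((m.factorial : ℝ) / rise (θ + n) m * ((n.choose i : ℝ) *
              rise (θ + n - i) (m - i * l) / ((m - i * l).factorial))) := by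
    intro x _
    rw [Finset.mul_sum, Finset.mul_sum]
    apply Finset.sum_congr rfl
    intro i _
    ring
  rw [Finset.sum_congr rfl step1]
  rw [Finset.sum_comm' (t' := Finset.range (N + 1)) (s' := fun i => Finset.range (i + 1))
    (by intro x y; simp only [Finset.mem_range, Finset.mem_Icc]; omega)]
  have step2 : ∀ i ∈ Finset.range (N + 1),
      ∑ x ∈ Finset.range (i + 1),
        (fall (x : ℝ) r * ((-1 : ℝ) ^ (i - x) * (i.choose x : ℝ))) *
          ((m.factorial : ℝ) / rise (θ + n) m * ((n.choose i : ℝ) *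
            rise (θ + n - i) (m - i * l) / ((m - i * l).factorial)))
      = (if i = r then (r.factorial : ℝ) else 0) *
          ((m.factorial : ℝ) / rise (θ + n) m * ((n.choose i : ℝ) *
            rise (θ + n - i) (m - i * l) / ((m - i * l).factorial))) := by
    intro i _
    rw [← Finset.sum_mul, key]
  rw [Finset.sum_congr rfl step2]
  simp only [ite_mul, zero_mul]
  rw [Finset.sum_ite_eq' (Finset.range (N + 1)) r]
  rw [if_pos (Finset.mem_range.mpr (by omega))]
  ring
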